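/- For any B-term e there exists a polynomial equivalent to it: i.e., there exist k > 0 and natural numbers n1, …, nk such that e is βη-equivalent to (B^{n1} B) ∘ (B^{n2} B) ∘ … ∘ (B^{nk} B). -/

import Mathlib

/-- Untyped lambda terms in de Bruijn representation. -/
inductive Lam where
  | var : Nat → Lam
  | app : Lam → Lam → Lam
  | lam : Lam → Lam
deriving DecidableEq

namespace Lam

/-- Lift (shift by one) all free variables with index ≥ `c`. -/
def lift (c : Nat) : Lam → Lam
  | var n => if n < c then var n else var (n + 1)
  | app a b => app (lift c a) (lift c b)
  | lam a => lam (lift (c + 1) a)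

/-- Substitute `s` for the free variable with index `d`. -/
def subst (d : Nat) (s : Lam) : Lam → Lam
  | var n => if n = d then s else if d < n then var (n - 1) else var n
  | app a b => app (subst d s a) (subst d s b)
  | lam a => lam (subst (d + 1) (lift 0 s) a)

/-- One-step βη-reduction (compatible closure of β and η). -/
inductive Step : Lam → Lam → Prop
  | beta (a b : Lam) : Step (app (lam a) b) (subst 0 b a)
  | eta (a : Lam) : Step (lam (app (lift 0 a) (var 0))) a
  | appL {a a' : Lam} (b : Lam) : Step a a' → Step (app a b) (app a' b)
  | appR (a : Lam) {b b' : Lam} : Step b b' → Step (app a b) (app a b')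
  | xi {a a' : Lam} : Step a a' → Step (lam a) (lam a')

/-- βη-equivalence: the equivalence relation generated by one-step βη-reduction. -/
def BetaEtaEq (a b : Lam) : Prop := Relation.EqvGen Step a b

/-- The B combinator λf.λg.λx. f (g x). -/
def B : Lam := lam (lam (lam (app (var 2) (app (var 1) (var 0)))))

/-- `flat X n` is the (n+1)-fold flat left application, i.e. `X_(n+1)`:
`flat X 0 = X = X_(1)` and `flat X (n+1) = (flat X n) X = X_(n+2)`. -/
def flat (X : Lam) : Nat → Lam
  | 0 => X
  | n + 1 => app (flat X n) X

end Lam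

open Lam

/-- B-terms: applicative combinations of the single combinator B. -/
inductive IsBTerm : Lam → Prop
  | base : IsBTerm B
  | app {a b : Lam} : IsBTerm a → IsBTerm b → IsBTerm (app a b)

/-- `bpow k e` is the k-fold application B (B (… (B e)…)). -/
def bpow : ℕ → Lam → Lam
  | 0, e => e
  | k + 1, e => app B (bpow k e)

/-- Composition e1 ∘ e2 = B e1 e2. -/
def comp (a b : Lam) : Lam := app (app B a) b

/-- The polynomial (B^{n1} B) ∘ (B^{n2} B) ∘ … ∘ (B^{nk} B) of a nonempty list
of degrees [n1, …, nk]. -/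
def poly : List ℕ → Lam
  | [] => B
  | [n] => bpow n B
  | n :: ns => comp (bpow n B) (poly ns)


namespace Lam

lemma lift_lift (t : Lam) : ∀ c d, d ≤ c → lift d (lift c t) = lift (c+1) (lift d t) := by
  induction t with
  | var n => intro c d h; simp only [lift]; split_ifs <;> simp [lift] <;> split_ifs <;>
      first | rfl | omega | (subst_vars; rfl)
  | app a b iha ihb => intro c d h; simp [lift, iha _ _ h, ihb _ _ h]
  | lam a ih => intro c d h; simp [lift, ih (c+1) (d+1) (by omega)]

lemma subst_lift (t : Lam) : ∀ d s, subst d s (lift d t) = t := by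
  induction t with
  | var n => intro d s; simp only [lift]; split_ifs <;> simp [subst] <;> split_ifs <;>
      first | rfl | omega | (subst_vars; rfl)
  | app a b iha ihb => intro d s; simp [lift, subst, iha, ihb]
  | lam a ih => intro d s; simp [lift, subst, ih]

lemma subst_var_lift (t : Lam) : ∀ d, subst d (var d) (lift (d+1) t) = t := by
  induction t with
  | var n => intro d; simp only [lift]; split_ifs <;> simp [subst] <;> split_ifs <;>
      first | rfl | omega | (subst_vars; rfl)
  | app a b iha ihb => intro d; simp [lift, subst, iha, ihb]
  | lam a ih => intro d; simp [lift, subst]; simpa using ih (d+1)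

lemma lift_B (c : Nat) : lift c B = B := by
  simp [B, lift]

lemma eqv_refl (a : Lam) : BetaEtaEq a a := Relation.EqvGen.refl a
lemma eqv_symm {a b : Lam} (h : BetaEtaEq a b) : BetaEtaEq b a := Relation.EqvGen.symm _ _ h
lemma eqv_trans {a b c : Lam} (h : BetaEtaEq a b) (h' : BetaEtaEq b c) : BetaEtaEq a c :=
  Relation.EqvGen.trans _ _ _ h h'
lemma eqv_step {a b : Lam} (h : Step a b) : BetaEtaEq a b := Relation.EqvGen.rel _ _ h

lemma eqv_appL {a a' : Lam} (b : Lam) (h : BetaEtaEq a a') :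
    BetaEtaEq (app a b) (app a' b) := by
  induction h with
  | rel x y h => exact eqv_step (Step.appL b h)
  | refl x => exact eqv_refl _
  | symm x y _ ih => exact eqv_symm ih
  | trans x y z _ _ ih ih' => exact eqv_trans ih ih'

lemma eqv_appR (a : Lam) {b b' : Lam} (h : BetaEtaEq b b') :
    BetaEtaEq (app a b) (app a b') := by
  induction h with
  | rel x y h => exact eqv_step (Step.appR a h)
  | refl x => exact eqv_refl _
  | symm x y _ ih => exact eqv_symm ih
  | trans x y z _ _ ih ih' => exact eqv_trans ih ih'

lemma eqv_lam {a a' : Lam} (h : BetaEtaEq a a') : BetaEtaEq (lam a) (lam a') := by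
  induction h with
  | rel x y h => exact eqv_step (Step.xi h)
  | refl x => exact eqv_refl _
  | symm x y _ ih => exact eqv_symm ih
  | trans x y z _ _ ih ih' => exact eqv_trans ih ih'

lemma eqv_app {a a' b b' : Lam} (h : BetaEtaEq a a') (h' : BetaEtaEq b b') :
    BetaEtaEq (app a b) (app a' b') := eqv_trans (eqv_appL b h) (eqv_appR a' h')

lemma step_beta' {a b t : Lam} (h : subst 0 b a = t) : Step (app (lam a) b) t :=
  h ▸ Step.beta a b

end Lam

/-- normal-ish form of a composition -/
def cpn (a b : Lam) : Lam := lam (app (lift 0 a) (app (lift 0 b) (var 0)))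

namespace Lam

lemma red_Bapp (a : Lam) :
    BetaEtaEq (app B a) (lam (lam (app (lift 0 (lift 0 a)) (app (var 1) (var 0))))) := by
  apply eqv_step
  apply step_beta'
  simp [subst]

lemma red_comp (a X : Lam) : BetaEtaEq (comp a X) (cpn a X) := by
  apply eqv_trans (eqv_appL X (red_Bapp a))
  apply eqv_step
  apply step_beta'
  simp [subst, cpn]
  rw [lift_lift a 0 0 (by omega), subst_lift]

lemma red_cmp_app (x y z : Lam) : BetaEtaEq (app (cpn x y) z) (app x (app y z)) := by
  apply eqv_step
  apply step_beta'
  simp [subst, cpn, subst_lift]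

end Lam

namespace Lam

lemma red_lift_cpn (x y : Lam) :
    BetaEtaEq (app (lift 0 (cpn x y)) (var 0)) (app (lift 0 x) (app (lift 0 y) (var 0))) := by
  simp only [cpn, lift]
  apply eqv_step; apply step_beta'
  simp only [subst, if_pos rfl]
  rw [← lift_lift x 0 0 le_rfl, ← lift_lift y 0 0 le_rfl]
  rw [lift_lift x 0 0 le_rfl, lift_lift y 0 0 le_rfl, subst_var_lift, subst_var_lift]
  norm_num
  simp [subst]

lemma red_comp_app (x y z : Lam) : BetaEtaEq (app (comp x y) z) (app x (app y z)) :=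
  eqv_trans (eqv_appL z (red_comp x y)) (red_cmp_app x y z)

lemma lift_comp (c : Nat) (a b : Lam) : lift c (comp a b) = comp (lift c a) (lift c b) := by
  simp [comp, lift, lift_B, B]

lemma eqv_assoc (a b c : Lam) : BetaEtaEq (comp a (comp b c)) (comp (comp a b) c) := by
  have hL : BetaEtaEq (comp a (comp b c))
      (lam (app (lift 0 a) (app (lift 0 b) (app (lift 0 c) (var 0))))) := by
    apply eqv_trans (eqv_appR _ (red_comp b c))
    apply eqv_trans (red_comp a (cpn b c))
    exact eqv_lam (eqv_appR _ (red_lift_cpn b c))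
  have hR : BetaEtaEq (comp (comp a b) c)
      (lam (app (lift 0 a) (app (lift 0 b) (app (lift 0 c) (var 0))))) := by
    apply eqv_trans (red_comp (comp a b) c)
    show BetaEtaEq (lam (app (lift 0 (comp a b)) (app (lift 0 c) (var 0)))) _
    rw [lift_comp]
    exact eqv_lam (red_comp_app (lift 0 a) (lift 0 b) (app (lift 0 c) (var 0)))
  exact eqv_trans hL (eqv_symm hR)

lemma eqv_B_comp (x y : Lam) : BetaEtaEq (app B (comp x y)) (comp (app B x) (app B y)) := by
  have hL : BetaEtaEq (app B (comp x y))
      (lam (lam (app (lift 0 (lift 0 x)) (app (lift 0 (lift 0 y)) (app (var 1) (var 0)))))) := by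
    apply eqv_trans (red_Bapp (comp x y))
    rw [lift_comp, lift_comp]
    exact eqv_lam (eqv_lam (red_comp_app _ _ _))
  have hR : BetaEtaEq (comp (app B x) (app B y))
      (lam (lam (app (lift 0 (lift 0 x)) (app (lift 0 (lift 0 y)) (app (var 1) (var 0)))))) := by
    apply eqv_trans (red_comp (app B x) (app B y))
    show BetaEtaEq
      (lam (app (lift 0 (app B x)) (app (lift 0 (app B y)) (var 0)))) _
    simp only [lift, lift_B]
    apply eqv_lam
    -- inner argument: app (app B (lift 0 y)) (var 0) = comp (lift 0 y) (var 0)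
    apply eqv_trans (eqv_appR _ (red_comp (lift 0 y) (var 0)))
    apply eqv_trans (red_comp (lift 0 x) (cpn (lift 0 y) (var 0)))
    show BetaEtaEq (lam (app (lift 0 (lift 0 x)) (app (lift 0 (cpn (lift 0 y) (var 0))) (var 0)))) _
    apply eqv_lam
    apply eqv_appR
    apply eqv_trans (red_lift_cpn (lift 0 y) (var 0))
    show BetaEtaEq (app (lift 0 (lift 0 y)) (app (var 1) (var 0))) _
    exact eqv_refl _
  exact eqv_trans hL (eqv_symm hR)

end Lam

namespace Lam

lemma poly_cons (n : ℕ) {ns : List ℕ} (h : ns ≠ []) :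
    poly (n :: ns) = comp (bpow n B) (poly ns) := by
  cases ns with
  | nil => exact absurd rfl h
  | cons m t => rfl

lemma eqv_B_poly : ∀ ms : List ℕ, ms ≠ [] →
    BetaEtaEq (app B (poly ms)) (poly (ms.map (· + 1))) := by
  intro ms
  induction ms with
  | nil => intro h; exact absurd rfl h
  | cons m rest ih =>
    intro _
    cases rest with
    | nil => exact eqv_refl _
    | cons p t =>
      have hr : (p :: t : List ℕ) ≠ [] := by simp
      have hr' : ((p :: t).map (· + 1) : List ℕ) ≠ [] := by simp
      rw [poly_cons m hr]
      apply eqv_trans (eqv_B_comp (bpow m B) (poly (p :: t)))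
      have : comp (app B (bpow m B)) (app B (poly (p :: t)))
          = comp (bpow (m + 1) B) (app B (poly (p :: t))) := rfl
      rw [this, show ((m :: p :: t).map (· + 1)) = (m + 1) :: ((p :: t).map (· + 1)) from rfl,
        poly_cons (m + 1) hr']
      exact eqv_appR _ (ih hr)

lemma eqv_concat : ∀ ns : List ℕ, ns ≠ [] → ∀ ms : List ℕ, ms ≠ [] →
    BetaEtaEq (comp (poly ns) (poly ms)) (poly (ns ++ ms)) := by
  intro ns
  induction ns with
  | nil => intro h; exact absurd rfl h
  | cons n rest ih =>
    intro _ ms hm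
    cases rest with
    | nil => rw [show ([n] ++ ms) = n :: ms from rfl, poly_cons n hm]; exact eqv_refl _
    | cons p t =>
      have hr : (p :: t : List ℕ) ≠ [] := by simp
      have hr' : ((p :: t) ++ ms : List ℕ) ≠ [] := by simp
      rw [poly_cons n hr, show ((n :: p :: t) ++ ms) = n :: ((p :: t) ++ ms) from rfl,
        poly_cons n hr']
      apply eqv_trans (eqv_symm (eqv_assoc (bpow n B) (poly (p :: t)) (poly ms)))
      exact eqv_appR _ (ih hr ms hm)

lemma eqv_app_single (n : ℕ) (ms : List ℕ) (hm : ms ≠ []) :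
    ∃ ks, ks ≠ [] ∧ BetaEtaEq (app (bpow n B) (poly ms)) (poly ks) := by
  cases n with
  | zero => exact ⟨ms.map (· + 1), by simpa using hm, eqv_B_poly ms hm⟩
  | succ n =>
    refine ⟨n :: ms, by simp, ?_⟩
    rw [poly_cons n hm]
    exact eqv_refl _

lemma eqv_app_poly : ∀ ns : List ℕ, ns ≠ [] → ∀ ms : List ℕ, ms ≠ [] →
    ∃ ks, ks ≠ [] ∧ BetaEtaEq (app (poly ns) (poly ms)) (poly ks) := by
  intro ns
  induction ns with
  | nil => intro h; exact absurd rfl h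
  | cons n rest ih =>
    intro _ ms hm
    cases rest with
    | nil => exact eqv_app_single n ms hm
    | cons p t =>
      have hr : (p :: t : List ℕ) ≠ [] := by simp
      obtain ⟨ks0, hks0, h0⟩ := ih hr ms hm
      obtain ⟨ks, hks, h1⟩ := eqv_app_single n ks0 hks0
      refine ⟨ks, hks, ?_⟩
      rw [poly_cons n hr]
      apply eqv_trans (red_comp_app (bpow n B) (poly (p :: t)) (poly ms))
      exact eqv_trans (eqv_trans (eqv_appR _ h0) h1) (eqv_refl _)

end Lam

/-- Every B-term is βη-equivalent to some polynomial
(B^{n1} B) ∘ … ∘ (B^{nk} B) with k > 0. -/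
theorem stmt17 (e : Lam) (he : IsBTerm e) :
    ∃ ns : List ℕ, ns ≠ [] ∧ BetaEtaEq e (poly ns) := by
  induction he with
  | base => exact ⟨[0], by simp, eqv_refl B⟩
  | app ha hb iha ihb =>
    obtain ⟨ns, hns, hA⟩ := iha
    obtain ⟨ms, hms, hB⟩ := ihb
    obtain ⟨ks, hks, hK⟩ := eqv_app_poly ns hns ms hms
    exact ⟨ks, hks, eqv_trans (eqv_app hA hB) hK⟩
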